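/- Let x, y, z ∈ [0,1] satisfy the triangle inequalities x ≤ y + z, y ≤ z + x, and z ≤ x + y. Then 9·( x²/(1+x) + y²/(1+y) + (1+2z)(1−z)/(2(1+z)) ) ≥ 3. -/
import Mathlib

set_option maxHeartbeats 1000000 in
private lemma key_ppm (x y z : ℝ) (hx0 : 0 ≤ x) (hx1 : x ≤ 1) (hy0 : 0 ≤ y) (hy1 : y ≤ 1)
    (hz0 : 0 ≤ z) (hz1 : z ≤ 1) (hzxy : z ≤ x + y) :
    0 ≤ (1+x)*(1+y)*(1+z) + 6*(x^2*(1+y)+y^2*(1+x))*(1+z) - 6*z^2*(1+x)*(1+y) := by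
  nlinarith [mul_nonneg hz0 (by linarith : (0:ℝ) ≤ x + y - z),
    mul_nonneg (mul_nonneg hz0 (by linarith : (0:ℝ) ≤ x + y - z)) (by linarith : (0:ℝ) ≤ x + y),
    sq_nonneg (x - y), sq_nonneg (x + y - 1), mul_nonneg hx0 hy0,
    mul_nonneg (sub_nonneg.2 hz1) (sq_nonneg (x - y)),
    mul_nonneg (sub_nonneg.2 hz1) (sq_nonneg (x + y - 1)),
    mul_nonneg hz0 (sq_nonneg (x - y)),
    mul_nonneg hz0 (sq_nonneg (x + y - 1)),
    mul_nonneg (mul_nonneg hx0 hy0) hz0]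

/-- triangle analysis for `(+,+,−)` triangles with `α = 18/11`:
for `x, y, z ∈ [0,1]` satisfying the triangle inequalities,
`9·(x²/(1+x) + y²/(1+y) + (1+2z)(1−z)/(2(1+z))) ≥ 3`. -/
theorem triangle_ppm (x y z : ℝ)
    (hx : x ∈ Set.Icc (0 : ℝ) 1) (hy : y ∈ Set.Icc (0 : ℝ) 1) (hz : z ∈ Set.Icc (0 : ℝ) 1)
    (hxyz : x ≤ y + z) (hyzx : y ≤ z + x) (hzxy : z ≤ x + y) :
    9 * (x ^ 2 / (1 + x) + y ^ 2 / (1 + y) +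
        (1 + 2 * z) * (1 - z) / (2 * (1 + z))) ≥ 3 := by
  obtain ⟨hx0, hx1⟩ := hx
  obtain ⟨hy0, hy1⟩ := hy
  obtain ⟨hz0, hz1⟩ := hz
  have hxp : (0:ℝ) < 1 + x := by linarith
  have hyp : (0:ℝ) < 1 + y := by linarith
  have hzp : (0:ℝ) < 2 * (1 + z) := by linarith
  have key := key_ppm x y z hx0 hx1 hy0 hy1 hz0 hz1 hzxy
  rw [ge_iff_le, div_add_div _ _ (ne_of_gt hxp) (ne_of_gt hyp),
    div_add_div _ _ (by positivity) (ne_of_gt hzp), ← mul_div_assoc,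
    le_div_iff₀ (by positivity)]
  nlinarith [key]
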